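/- arXiv:cs/0504047 — 2 statements merged into one kernel-verified Lean document; each statement's English description precedes it below -/
import Mathlib

section
/- Let Σ ⊆ Σ' be finite alphabets and S ∈ Σ^∞. Then dim_FS^{(Σ')}(S) = (log|Σ| / log|Σ'|) · dim_FS^{(Σ)}(S), where dim_FS^{(Σ')}(S) is the finite-state dimension of S considered as a sequence over the larger alphabet Σ'. -/
open Filter
open scoped Pointwise

/-- The prefix of length `n` of the infinite sequence `S`. -/
def pre {α : Type*} (S : ℕ → α) (n : ℕ) : List α := List.ofFn fun i : Fin n => S i

/-- A finite-state gambler over the alphabet `A`: finitely many states, a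
transition function, and a rational betting function giving a probability
measure on `A` at each state. -/
structure FSG (A : Type) [Fintype A] where
  Q : Type
  fin : Finite Q
  q0 : Q
  δ : Q → A → Q
  β : Q → A → ℚ
  β_nonneg : ∀ q a, 0 ≤ β q a
  β_sum : ∀ q, ∑ a : A, β q a = 1

variable {A : Type} [Fintype A]

/-- The state reached after reading the string `w`. -/
def FSG.run (G : FSG A) (w : List A) : G.Q := w.foldl G.δ G.q0

/-- The martingale of the finite-state gambler `G`:
`d_G(λ) = 1` and `d_G(wa) = d_G(w) · β(δ(w))(a) · |A|`. -/
def FSG.mart (G : FSG A) (w : List A) : ℝ :=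
  ∏ i : Fin w.length, ((G.β (G.run (w.take i)) (w.get i) : ℝ) * (Fintype.card A : ℝ))

/-- The `s`-gale of `G`: `d_G^(s)(w) = |A|^((s-1)|w|) · d_G(w)`. -/
noncomputable def FSG.sgale (G : FSG A) (s : ℝ) (w : List A) : ℝ :=
  (Fintype.card A : ℝ) ^ ((s - 1) * (w.length : ℝ)) * G.mart w

/-- `G` `s`-succeeds on `S`: the `s`-gale is unbounded along prefixes of `S`
(equivalently, its limsup is `∞`). -/
def FSG.succeeds (G : FSG A) (s : ℝ) (S : ℕ → A) : Prop :=
  ∀ c : ℝ, ∃ n : ℕ, c < G.sgale s (pre S n)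

/-- The finite-state dimension of `S` over the alphabet `A`. -/
noncomputable def dimFS (S : ℕ → A) : ℝ :=
  sInf {s : ℝ | 0 ≤ s ∧ ∃ G : FSG A, G.succeeds s S}

/-! ### Auxiliary lemmas -/

namespace FSG

open Classical

theorem run_append_singleton (G : FSG A) (w : List A) (a : A) :
    G.run (w ++ [a]) = G.δ (G.run w) a := by
  simp [FSG.run, List.foldl_append]

theorem mart_nil (G : FSG A) : G.mart [] = 1 := by simp [FSG.mart]

theorem mart_append_singleton (G : FSG A) (w : List A) (a : A) :
    G.mart (w ++ [a]) = G.mart w * ((G.β (G.run w) a : ℝ) * (Fintype.card A : ℝ)) := by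
  have h : (w ++ [a]).length = w.length + 1 := by simp
  unfold FSG.mart
  rw [Fintype.prod_equiv (finCongr h)
      (fun i : Fin (w ++ [a]).length =>
        ((G.β (G.run ((w ++ [a]).take i)) ((w ++ [a]).get i) : ℝ) * (Fintype.card A : ℝ)))
      (fun j : Fin (w.length + 1) =>
        ((G.β (G.run ((w ++ [a]).take ((finCongr h).symm j)))
          ((w ++ [a]).get ((finCongr h).symm j)) : ℝ) * (Fintype.card A : ℝ)))
      (by intro x; simp)]
  rw [Fin.prod_univ_castSucc]
  congr 1
  · apply Finset.prod_congr rfl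
    intro i _
    have hi : (i : ℕ) < w.length := i.isLt
    have h1 : ((w ++ [a]).take ((finCongr h).symm i.castSucc : Fin _)) = w.take i := by
      simp [List.take_append_of_le_length (Nat.le_of_lt hi)]
    have h2 : ((w ++ [a]).get ((finCongr h).symm i.castSucc)) = w.get i := by
      simp [List.get_eq_getElem, List.getElem_append_left hi]
    rw [h1, h2]
  · have h1 : ((w ++ [a]).take ((finCongr h).symm (Fin.last w.length) : Fin _)) = w := by
      simp
    have h2 : ((w ++ [a]).get ((finCongr h).symm (Fin.last w.length))) = a := by
      simp [List.get_eq_getElem]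
    rw [h1, h2]

theorem mart_nonneg (G : FSG A) (w : List A) : 0 ≤ G.mart w := by
  apply Finset.prod_nonneg
  intro i _
  have := G.β_nonneg (G.run (w.take i)) (w.get i)
  positivity

variable {A' : Type} [Fintype A']

/-- Push a gambler over `A` forward along an injection `ι : A → A'`. -/
noncomputable def push (G : FSG A) (ι : A → A') : FSG A' where
  Q := G.Q
  fin := G.fin
  q0 := G.q0
  δ q a' := if h : ∃ a, ι a = a' then G.δ q h.choose else q
  β q a' := ∑ a ∈ Finset.univ.filter (fun a => ι a = a'), G.β q a
  β_nonneg q a' := Finset.sum_nonneg fun a _ => G.β_nonneg q a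
  β_sum q := by
    rw [Finset.sum_fiberwise_of_maps_to (fun a _ => Finset.mem_univ (ι a)) (G.β q)]
    exact G.β_sum q

lemma push_δ (G : FSG A) (ι : A → A') (hι : Function.Injective ι) (q : G.Q) (a : A) :
    (G.push ι).δ q (ι a) = G.δ q a := by
  have h : ∃ b, ι b = ι a := ⟨a, rfl⟩
  simp only [push, dif_pos h]
  congr 1
  exact hι h.choose_spec

lemma push_β (G : FSG A) (ι : A → A') (hι : Function.Injective ι) (q : G.Q) (a : A) :
    (G.push ι).β q (ι a) = G.β q a := by
  simp only [push]
  rw [show Finset.univ.filter (fun b => ι b = ι a) = {a} from ?_, Finset.sum_singleton]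
  ext b
  simp [hι.eq_iff]

lemma push_run (G : FSG A) (ι : A → A') (hι : Function.Injective ι) (w : List A) :
    (G.push ι).run (w.map ι) = G.run w := by
  unfold FSG.run
  rw [List.foldl_map]
  have : ∀ q : G.Q, w.foldl (fun q a => (G.push ι).δ q (ι a)) q = w.foldl G.δ q := by
    induction w with
    | nil => intro q; rfl
    | cons a t ih => intro q; exact (ih _).trans (congrArg (fun r => List.foldl G.δ r t) (push_δ G ι hι q a))
  exact this _

lemma push_mart (G : FSG A) (ι : A → A') (hι : Function.Injective ι)
    (hk : (0:ℝ) < Fintype.card A) (w : List A) :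
    (G.push ι).mart (w.map ι)
      = G.mart w * ((Fintype.card A' : ℝ) / (Fintype.card A : ℝ)) ^ w.length := by
  induction w using List.reverseRecOn with
  | nil => simp [mart_nil]
  | append_singleton t a ih =>
      rw [List.map_append, List.map_singleton, mart_append_singleton,
        mart_append_singleton, ih, push_run G ι hι, push_β G ι hι]
      simp only [List.length_append, List.length_cons, List.length_nil, pow_succ]
      field_simp

/-- Pull a gambler over `A'` back along an injection `ι : A → A'`; the mass
missing from the image of `ι` is put on the default letter `a₀`. -/
noncomputable def pull (G' : FSG A') (ι : A → A') (hι : Function.Injective ι) (a₀ : A) :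
    FSG A where
  Q := G'.Q
  fin := G'.fin
  q0 := G'.q0
  δ q a := G'.δ q (ι a)
  β q a := G'.β q (ι a) + if a = a₀ then 1 - ∑ b : A, G'.β q (ι b) else 0
  β_nonneg q a := by
    have hsum : ∑ b : A, G'.β q (ι b) ≤ 1 := by
      have h1 : ∑ b : A, G'.β q (ι b) = ∑ a' ∈ Finset.univ.image ι, G'.β q a' :=
        (Finset.sum_image (fun x _ y _ h => hι h)).symm
      rw [h1, ← G'.β_sum q]
      exact Finset.sum_le_sum_of_subset_of_nonneg (Finset.subset_univ _)
        (fun a' _ _ => G'.β_nonneg q a')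
    have h0 := G'.β_nonneg q (ι a)
    split
    · linarith
    · simpa using h0
  β_sum q := by
    rw [Finset.sum_add_distrib, Finset.sum_ite_eq' Finset.univ a₀
      (fun _ => 1 - ∑ b : A, G'.β q (ι b))]
    simp

lemma pull_run (G' : FSG A') (ι : A → A') (hι : Function.Injective ι) (a₀ : A) (w : List A) :
    (G'.pull ι hι a₀).run w = G'.run (w.map ι) := by
  unfold FSG.run
  rw [List.foldl_map]
  rfl

lemma pull_β (G' : FSG A') (ι : A → A') (hι : Function.Injective ι) (a₀ : A)
    (q : G'.Q) (a : A) :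
    (G'.β q (ι a) : ℝ) ≤ ((G'.pull ι hι a₀).β q a : ℝ) := by
  have : G'.β q (ι a) ≤ (G'.pull ι hι a₀).β q a := by
    have := (G'.pull ι hι a₀).β_nonneg q a
    simp only [pull] at this ⊢
    have hsum : ∑ b : A, G'.β q (ι b) ≤ 1 := by
      have h1 : ∑ b : A, G'.β q (ι b) = ∑ a' ∈ Finset.univ.image ι, G'.β q a' :=
        (Finset.sum_image (fun x _ y _ h => hι h)).symm
      rw [h1, ← G'.β_sum q]
      exact Finset.sum_le_sum_of_subset_of_nonneg (Finset.subset_univ _)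
        (fun a' _ _ => G'.β_nonneg q a')
    split <;> simp <;> linarith
  exact_mod_cast this

lemma pull_mart (G' : FSG A') (ι : A → A') (hι : Function.Injective ι) (a₀ : A)
    (hk : (0:ℝ) < Fintype.card A) (hk' : (0:ℝ) < Fintype.card A') (w : List A) :
    G'.mart (w.map ι) * ((Fintype.card A : ℝ) / (Fintype.card A' : ℝ)) ^ w.length
      ≤ (G'.pull ι hι a₀).mart w := by
  induction w using List.reverseRecOn with
  | nil => simp [mart_nil]
  | append_singleton t a ih =>
      rw [List.map_append, List.map_singleton, mart_append_singleton,
        mart_append_singleton, pull_run G' ι hι a₀]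
      simp only [List.length_append, List.length_cons, List.length_nil, pow_succ]
      have h1 : G'.mart (t.map ι) * ((G'.β (G'.run (t.map ι)) (ι a) : ℝ) * (Fintype.card A' : ℝ))
          * (((Fintype.card A : ℝ) / (Fintype.card A' : ℝ)) ^ t.length
            * ((Fintype.card A : ℝ) / (Fintype.card A' : ℝ)))
          = (G'.mart (t.map ι) * ((Fintype.card A : ℝ) / (Fintype.card A' : ℝ)) ^ t.length)
            * ((G'.β (G'.run (t.map ι)) (ι a) : ℝ) * (Fintype.card A : ℝ)) := by
        field_simp
      rw [h1]
      apply mul_le_mul ih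
      · apply mul_le_mul_of_nonneg_right (pull_β G' ι hι a₀ _ a) hk.le
      · have := G'.β_nonneg (G'.run (t.map ι)) (ι a)
        positivity
      · exact mart_nonneg _ _

end FSG

lemma pre_map {A A' : Type} (ι : A → A') (S : ℕ → A) (n : ℕ) :
    pre (ι ∘ S) n = (pre S n).map ι := by
  simp [pre, List.map_ofFn]
  rfl

lemma key_rpow {k k' c : ℝ} (hk : 0 < k) (hk' : 0 < k')
    (hlog : c * Real.log k' = Real.log k) (s : ℝ) (n : ℕ) :
    k' ^ ((c * s - 1) * (n : ℝ)) * ((k' / k) ^ n) = k ^ ((s - 1) * (n : ℝ)) := by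
  have h1 : k' ^ (c * s * (n : ℝ)) = k ^ (s * (n : ℝ)) := by
    rw [Real.rpow_def_of_pos hk', Real.rpow_def_of_pos hk]
    congr 1
    rw [show Real.log k' * (c * s * (n : ℝ)) = (c * Real.log k') * (s * (n : ℝ)) by ring, hlog]
  have e1 : (c * s - 1) * (n : ℝ) = c * s * (n : ℝ) + (-(n : ℝ)) := by ring
  have e2 : (s - 1) * (n : ℝ) = s * (n : ℝ) + (-(n : ℝ)) := by ring
  rw [e1, e2, Real.rpow_add hk', Real.rpow_add hk, h1, Real.rpow_neg hk'.le,
    Real.rpow_neg hk.le, Real.rpow_natCast, Real.rpow_natCast, div_pow]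
  have hkn : (k : ℝ) ^ n ≠ 0 := (pow_pos hk n).ne'
  have hk'n : (k' : ℝ) ^ n ≠ 0 := (pow_pos hk' n).ne'
  field_simp

lemma key_rpow' {k k' c : ℝ} (hk : 0 < k) (hk' : 0 < k')
    (hlog : c * Real.log k' = Real.log k) (s : ℝ) (n : ℕ) :
    k ^ ((s - 1) * (n : ℝ)) * ((k / k') ^ n) = k' ^ ((c * s - 1) * (n : ℝ)) := by
  rw [← key_rpow hk hk' hlog s n]
  have hkn : (k : ℝ) ^ n ≠ 0 := (pow_pos hk n).ne'
  have hk'n : (k' : ℝ) ^ n ≠ 0 := (pow_pos hk' n).ne'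
  rw [div_pow, div_pow]
  field_simp

lemma push_sgale {A A' : Type} [Fintype A] [Fintype A'] (G : FSG A) (ι : A → A')
    (hι : Function.Injective ι) (hk : (0:ℝ) < Fintype.card A)
    (hk' : (0:ℝ) < Fintype.card A') {c : ℝ}
    (hlog : c * Real.log (Fintype.card A') = Real.log (Fintype.card A))
    (s : ℝ) (w : List A) :
    (G.push ι).sgale (c * s) (w.map ι) = G.sgale s w := by
  unfold FSG.sgale
  rw [FSG.push_mart G ι hι hk, List.length_map, mul_comm (G.mart w) _, ← mul_assoc,
    key_rpow hk hk' hlog s w.length]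

lemma pull_sgale {A A' : Type} [Fintype A] [Fintype A'] (G' : FSG A') (ι : A → A')
    (hι : Function.Injective ι) (a₀ : A) (hk : (0:ℝ) < Fintype.card A)
    (hk' : (0:ℝ) < Fintype.card A') {c : ℝ}
    (hlog : c * Real.log (Fintype.card A') = Real.log (Fintype.card A))
    (s : ℝ) (w : List A) :
    G'.sgale (c * s) (w.map ι) ≤ (G'.pull ι hι a₀).sgale s w := by
  unfold FSG.sgale
  rw [List.length_map, ← key_rpow' hk hk' hlog s w.length, mul_assoc,
    mul_comm (((Fintype.card A : ℝ) / (Fintype.card A' : ℝ)) ^ w.length) (G'.mart (w.map ι))]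
  exact mul_le_mul_of_nonneg_left (FSG.pull_mart G' ι hι a₀ hk hk' w)
    (Real.rpow_nonneg hk.le _)

theorem dimFS_alphabet_change {A A' : Type} [Fintype A] [Fintype A']
    (hA : 2 ≤ Fintype.card A) (ι : A → A') (hι : Function.Injective ι)
    (S : ℕ → A) :
    dimFS (ι ∘ S) = Real.log (Fintype.card A) / Real.log (Fintype.card A') * dimFS S := by
  classical
  have hA' : 2 ≤ Fintype.card A' := hA.trans (Fintype.card_le_of_injective ι hι)
  have hk : (0:ℝ) < Fintype.card A := by
    have : 0 < Fintype.card A := by omega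
    exact_mod_cast this
  have hk' : (0:ℝ) < Fintype.card A' := by
    have : 0 < Fintype.card A' := by omega
    exact_mod_cast this
  have hlogk : 0 < Real.log (Fintype.card A) :=
    Real.log_pos (by exact_mod_cast hA.trans_lt' one_lt_two)
  have hlogk' : 0 < Real.log (Fintype.card A') :=
    Real.log_pos (by exact_mod_cast hA'.trans_lt' one_lt_two)
  set c := Real.log (Fintype.card A) / Real.log (Fintype.card A') with hc_def
  have hc : 0 < c := div_pos hlogk hlogk'
  have hlog : c * Real.log (Fintype.card A') = Real.log (Fintype.card A) :=
    div_mul_cancel₀ _ hlogk'.ne'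
  obtain ⟨a₀⟩ : Nonempty A := Fintype.card_pos_iff.mp (by omega)
  have hset : {s' : ℝ | 0 ≤ s' ∧ ∃ G' : FSG A', G'.succeeds s' (ι ∘ S)}
      = c • {s : ℝ | 0 ≤ s ∧ ∃ G : FSG A, G.succeeds s S} := by
    ext s'
    simp only [Set.mem_smul_set, Set.mem_setOf_eq, smul_eq_mul]
    constructor
    · rintro ⟨hs', G', hG'⟩
      refine ⟨s' / c, ⟨div_nonneg hs' hc.le, ⟨G'.pull ι hι a₀, ?_⟩⟩, by field_simp⟩
      intro C
      obtain ⟨n, hn⟩ := hG' C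
      refine ⟨n, lt_of_lt_of_le hn ?_⟩
      have h2 := pull_sgale G' ι hι a₀ hk hk' hlog (s' / c) (pre S n)
      rw [pre_map ι S n]
      have h3 : c * (s' / c) = s' := by field_simp
      rw [h3] at h2
      exact h2
    · rintro ⟨s, ⟨hs, G, hG⟩, rfl⟩
      refine ⟨mul_nonneg hc.le hs, ⟨G.push ι, ?_⟩⟩
      intro C
      obtain ⟨n, hn⟩ := hG C
      refine ⟨n, ?_⟩
      rw [pre_map ι S n, push_sgale G ι hι hk hk' hlog s (pre S n)]
      exact hn
  rw [dimFS, dimFS, hset, Real.sInf_smul_of_nonneg hc.le, smul_eq_mul]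
end

section
/- Let l be a positive integer, ∅ ≠ A ⊆ {0,1}^l, and S an infinite sequence whose consecutive length-l blocks all lie in A (so S ∈ A^∞). Then dim_FS^{({0,1})}(S) = (log|A| / l) · dim_FS^{(A)}(S), where the left-hand side is the finite-state dimension of S as a binary sequence and the right-hand side views each length-l block as a single character of the alphabet A. -/
open Filter

variable {A : Type} [Fintype A]

-- auxiliary lemmas


lemma pre_succ {γ : Type*} (S : ℕ → γ) (n : ℕ) : pre S (n+1) = pre S n ++ [S n] := by
  rw [pre, List.ofFn_succ', List.concat_eq_append]
  simp only [Fin.coe_castSucc, Fin.val_last]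
  rfl

lemma pre_add {γ : Type*} (S : ℕ → γ) (m j : ℕ) :
    pre S (m + j) = pre S m ++ List.ofFn (fun i : Fin j => S (m + i)) := by
  induction j with
  | zero => simp
  | succ j ih =>
    rw [← Nat.add_assoc, pre_succ, ih, List.ofFn_succ', List.concat_eq_append, ← List.append_assoc]
    simp only [Fin.coe_castSucc, Fin.val_last]

lemma FSG.run_concat (G : FSG A) (w : List A) (a : A) :
    G.run (w ++ [a]) = G.δ (G.run w) a := by
  simp [FSG.run, List.foldl_append]

lemma FSG.run_append (G : FSG A) (w v : List A) :
    G.run (w ++ v) = v.foldl G.δ (G.run w) := by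
  simp [FSG.run, List.foldl_append]

lemma FSG.mart_nil_s9 (G : FSG A) : G.mart [] = 1 := by
  simp [FSG.mart]

lemma FSG.mart_concat (G : FSG A) (w : List A) (a : A) :
    G.mart (w ++ [a]) = G.mart w * ((G.β (G.run w) a : ℝ) * (Fintype.card A : ℝ)) := by
  have h : w.length + 1 = (w ++ [a]).length := by simp
  unfold FSG.mart
  rw [← Fin.prod_congr' _ h, Fin.prod_univ_castSucc]
  congr 1
  · apply Finset.prod_congr rfl
    intro i _
    have h1 : ((w ++ [a]).take ((Fin.cast h i.castSucc) : ℕ)) = w.take i := by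
      rw [List.take_append_of_le_length]
      · simp
      · simp only [Fin.coe_cast, Fin.coe_castSucc]; exact i.isLt.le
    have h2 : (w ++ [a]).get (Fin.cast h i.castSucc) = w.get i := by
      simp [List.getElem_append_left]
    rw [h1, h2]
  · have h1 : ((w ++ [a]).take ((Fin.cast h (Fin.last w.length)) : ℕ)) = w := by
      simp [List.take_left]
    have h2 : (w ++ [a]).get (Fin.cast h (Fin.last w.length)) = a := by
      simp
    rw [h1, h2]

lemma FSG.mart_nonneg_s9 (G : FSG A) (w : List A) : 0 ≤ G.mart w := by
  apply Finset.prod_nonneg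
  intro i _
  have := G.β_nonneg (G.run (w.take i)) (w.get i)
  positivity

lemma FSG.beta_le_one (G : FSG A) (q : G.Q) (a : A) : G.β q a ≤ 1 := by
  have h := G.β_sum q
  calc G.β q a ≤ ∑ b : A, G.β q b := by
        apply Finset.single_le_sum (fun b _ => G.β_nonneg q b) (Finset.mem_univ a)
    _ = 1 := h

/-- Probability that `G` starting at state `q` follows the word `w`. -/
def pfq (G : FSG A) : G.Q → List A → ℚ
  | _, [] => 1
  | q, b :: w => G.β q b * pfq G (G.δ q b) w

lemma pfq_nonneg (G : FSG A) (q : G.Q) (w : List A) : 0 ≤ pfq G q w := by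
  induction w generalizing q with
  | nil => norm_num [pfq]
  | cons b w ih => exact mul_nonneg (G.β_nonneg q b) (ih _)

lemma pfq_le_one (G : FSG A) (q : G.Q) (w : List A) : pfq G q w ≤ 1 := by
  induction w generalizing q with
  | nil => norm_num [pfq]
  | cons b w ih =>
    calc G.β q b * pfq G (G.δ q b) w ≤ 1 * 1 := by
          apply mul_le_mul (G.beta_le_one q b) (ih _) (pfq_nonneg G _ w) zero_le_one
      _ = 1 := by norm_num

lemma FSG.mart_append (G : FSG A) (w v : List A) :
    G.mart (w ++ v) = G.mart w * ((pfq G (G.run w) v : ℝ) * (Fintype.card A : ℝ) ^ v.length) := by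
  induction v generalizing w with
  | nil => simp [pfq]
  | cons b v ih =>
    have : w ++ b :: v = (w ++ [b]) ++ v := by simp
    rw [this, ih, FSG.mart_concat, FSG.run_concat, pfq]
    push_cast
    simp only [List.length_cons]
    ring

lemma sum_pfq (G : FSG A) (n : ℕ) (q : G.Q) :
    ∑ v : Fin n → A, pfq G q (List.ofFn v) = 1 := by
  induction n generalizing q with
  | zero => simp [pfq]
  | succ n ih =>
    rw [← (Fin.consEquiv (fun _ : Fin (n+1) => A)).sum_comp (fun v => pfq G q (List.ofFn v))]
    rw [Fintype.sum_prod_type]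
    have : ∀ (b : A) (v : Fin n → A),
        pfq G q (List.ofFn (Fin.consEquiv (fun _ : Fin (n+1) => A) (b, v)))
          = G.β q b * pfq G (G.δ q b) (List.ofFn v) := by
      intro b v
      have hofn : List.ofFn (Fin.cons b v : Fin (n+1) → A) = b :: List.ofFn v := by
        simp
      show pfq G q (List.ofFn (Fin.cons b v)) = _
      rw [hofn, pfq]
    simp only [this]
    have h2 : ∀ b : A, ∑ v : Fin n → A, G.β q b * pfq G (G.δ q b) (List.ofFn v) = G.β q b := by
      intro b; rw [← Finset.mul_sum, ih, mul_one]
    simp only [h2]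
    exact G.β_sum q

section Main

variable (l : ℕ) (A : Finset (Fin l → Bool))

/-- Sum of path probabilities over all blocks in `A`. -/
def sqG (G : FSG Bool) (q : G.Q) : ℚ :=
  ∑ a : {v : Fin l → Bool // v ∈ A}, pfq G q (List.ofFn (a : Fin l → Bool))

lemma sqG_nonneg (G : FSG Bool) (q : G.Q) : 0 ≤ sqG l A G q :=
  Finset.sum_nonneg fun a _ => pfq_nonneg G q _

lemma sqG_le_one (G : FSG Bool) (q : G.Q) : sqG l A G q ≤ 1 := by
  have h1 : sqG l A G q = ∑ v ∈ A, pfq G q (List.ofFn v) := by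
    rw [sqG, ← Finset.sum_coe_sort A (fun v => pfq G q (List.ofFn v))]
  rw [h1]
  calc ∑ v ∈ A, pfq G q (List.ofFn v)
      ≤ ∑ v : Fin l → Bool, pfq G q (List.ofFn v) := by
        apply Finset.sum_le_sum_of_subset_of_nonneg (Finset.subset_univ A)
        intro v _ _; exact pfq_nonneg G q _
    _ = 1 := sum_pfq G l q

lemma pfq_le_sqG (G : FSG Bool) (q : G.Q) (a : {v : Fin l → Bool // v ∈ A}) :
    pfq G q (List.ofFn (a : Fin l → Bool)) ≤ sqG l A G q :=
  Finset.single_le_sum (fun b _ => pfq_nonneg G q _) (Finset.mem_univ a)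

lemma card_blk (hA : A.Nonempty) : Fintype.card {v : Fin l → Bool // v ∈ A} = A.card := by
  simp [Fintype.card_coe]

/-- The block gambler induced by a binary gambler. -/
def GA (hA : A.Nonempty) (G : FSG Bool) : FSG {v : Fin l → Bool // v ∈ A} where
  Q := G.Q
  fin := G.fin
  q0 := G.q0
  δ := fun q a => (List.ofFn (a : Fin l → Bool)).foldl G.δ q
  β := fun q a => if sqG l A G q = 0 then (A.card : ℚ)⁻¹
      else pfq G q (List.ofFn (a : Fin l → Bool)) / sqG l A G q
  β_nonneg := by
    intro q a
    by_cases h : sqG l A G q = 0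
    · rw [if_pos h]
      positivity
    · rw [if_neg h]
      exact div_nonneg (pfq_nonneg G q _) (sqG_nonneg l A G q)
  β_sum := by
    intro q
    by_cases h : sqG l A G q = 0
    · simp only [if_pos h]
      rw [Finset.sum_const, Finset.card_univ, card_blk l A hA, nsmul_eq_mul]
      rw [mul_inv_cancel₀]
      exact_mod_cast hA.card_pos.ne'
    · simp only [if_neg h]
      rw [← Finset.sum_div, ← sqG, div_self h]

variable {S : ℕ → Bool} {T : ℕ → {v : Fin l → Bool // v ∈ A}}

lemma pre_zero {γ : Type*} (S : ℕ → γ) : pre S 0 = [] := by simp [pre]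

lemma blk_list (hT : ∀ k : ℕ, (T k : Fin l → Bool) = fun i : Fin l => S (k * l + i)) (k : ℕ) :
    List.ofFn ((T k : Fin l → Bool)) = List.ofFn (fun i : Fin l => S (k * l + i)) := by
  rw [hT k]

lemma GA_run (hA : A.Nonempty) (G : FSG Bool)
    (hT : ∀ k : ℕ, (T k : Fin l → Bool) = fun i : Fin l => S (k * l + i)) (k : ℕ) :
    (GA l A hA G).run (pre T k) = G.run (pre S (k * l)) := by
  induction k with
  | zero => rw [Nat.zero_mul, pre_zero, pre_zero]; rfl
  | succ k ih =>
    rw [pre_succ, FSG.run_concat, Nat.succ_mul, pre_add, FSG.run_append, ← ih]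
    show (List.ofFn ((T k : Fin l → Bool))).foldl G.δ _ = _
    rw [blk_list l A hT k]

lemma GA_mart (hA : A.Nonempty) (G : FSG Bool)
    (hT : ∀ k : ℕ, (T k : Fin l → Bool) = fun i : Fin l => S (k * l + i)) (k : ℕ) :
    G.mart (pre S (k * l)) * ((A.card : ℝ) / 2 ^ l) ^ k ≤ (GA l A hA G).mart (pre T k) := by
  have h2l : (0:ℝ) < 2 ^ l := by positivity
  induction k with
  | zero => rw [Nat.zero_mul, pre_zero, pre_zero, FSG.mart_nil_s9, FSG.mart_nil_s9]; norm_num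
  | succ k ih =>
    have hq := GA_run l A hA G hT k
    set q := G.run (pre S (k * l)) with hqdef
    -- pf ≤ β of the block gambler
    have key : (pfq G q (List.ofFn ((T k : Fin l → Bool))) : ℝ)
        ≤ ((GA l A hA G).β ((GA l A hA G).run (pre T k)) (T k) : ℝ) := by
      rw [hq]
      show _ ≤ ((if sqG l A G q = 0 then (A.card : ℚ)⁻¹
        else pfq G q (List.ofFn ((T k : Fin l → Bool))) / sqG l A G q : ℚ) : ℝ)
      by_cases h : sqG l A G q = 0
      · rw [if_pos h]
        have h0 : pfq G q (List.ofFn ((T k : Fin l → Bool))) = 0 := by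
          have := pfq_le_sqG l A G q (T k)
          have := pfq_nonneg G q (List.ofFn ((T k : Fin l → Bool)))
          linarith [h ▸ pfq_le_sqG l A G q (T k)]
        rw [h0]
        push_cast
        positivity
      · rw [if_neg h]
        have hsq : 0 < sqG l A G q := lt_of_le_of_ne (sqG_nonneg l A G q) (Ne.symm h)
        have hle1 := sqG_le_one l A G q
        have hpf := pfq_nonneg G q (List.ofFn ((T k : Fin l → Bool)))
        have : pfq G q (List.ofFn ((T k : Fin l → Bool)))
            ≤ pfq G q (List.ofFn ((T k : Fin l → Bool))) / sqG l A G q := by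
          rw [le_div_iff₀ hsq]
          nlinarith
        exact_mod_cast this
    -- expand both sides
    have hmartS : G.mart (pre S ((k+1) * l))
        = G.mart (pre S (k * l)) * ((pfq G q (List.ofFn ((T k : Fin l → Bool))) : ℝ) * 2 ^ l) := by
      rw [Nat.succ_mul, pre_add, FSG.mart_append, blk_list l A hT k]
      norm_num
      exact Or.inl rfl
    have hmartT : (GA l A hA G).mart (pre T (k+1))
        = (GA l A hA G).mart (pre T k)
          * (((GA l A hA G).β ((GA l A hA G).run (pre T k)) (T k) : ℝ) * (A.card : ℝ)) := by
      rw [pre_succ, FSG.mart_concat, card_blk l A hA]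
    rw [hmartS, hmartT]
    have hpf : (0:ℝ) ≤ (pfq G q (List.ofFn ((T k : Fin l → Bool))) : ℝ) := by
      exact_mod_cast pfq_nonneg G q _
    have hmT : (0:ℝ) ≤ (GA l A hA G).mart (pre T k) := FSG.mart_nonneg_s9 _ _
    have ha : (0:ℝ) ≤ (A.card : ℝ) := by positivity
    calc G.mart (pre S (k * l)) * ((pfq G q (List.ofFn ((T k : Fin l → Bool))) : ℝ) * 2 ^ l)
          * ((A.card : ℝ) / 2 ^ l) ^ (k+1)
        = (G.mart (pre S (k * l)) * ((A.card : ℝ) / 2 ^ l) ^ k)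
          * ((pfq G q (List.ofFn ((T k : Fin l → Bool))) : ℝ) * (A.card : ℝ)) := by
          rw [pow_succ, div_pow]
          field_simp
      _ ≤ (GA l A hA G).mart (pre T k)
          * (((GA l A hA G).β ((GA l A hA G).run (pre T k)) (T k) : ℝ) * (A.card : ℝ)) := by
          apply mul_le_mul ih (mul_le_mul_of_nonneg_right key ha) (by positivity) hmT

lemma pre_length {γ : Type*} (S : ℕ → γ) (n : ℕ) : (pre S n).length = n := by simp [pre]

lemma mart_block_bound (G : FSG Bool) (S : ℕ → Bool) (m r : ℕ) :
    G.mart (pre S (m + r)) ≤ G.mart (pre S m) * 2 ^ r := by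
  rw [pre_add, FSG.mart_append]
  have h1 : (pfq G (G.run (pre S m)) (List.ofFn fun i : Fin r => S (m + i)) : ℝ) ≤ 1 := by
    exact_mod_cast pfq_le_one G _ _
  have h0 : (0:ℝ) ≤ (pfq G (G.run (pre S m)) (List.ofFn fun i : Fin r => S (m + i)) : ℝ) := by
    exact_mod_cast pfq_nonneg G _ _
  have hm := FSG.mart_nonneg_s9 G (pre S m)
  have hcard : (Fintype.card Bool : ℝ) = 2 := by simp
  rw [hcard, List.length_ofFn]
  have h2 : (pfq G (G.run (pre S m)) (List.ofFn fun i => S (m + i)) : ℝ) * 2 ^ r ≤ 2 ^ r :=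
    mul_le_of_le_one_left (by positivity) h1
  exact mul_le_mul_of_nonneg_left h2 hm

lemma sgale_boundary (G : FSG Bool) (S : ℕ → Bool) (s : ℝ) (hs : 0 ≤ s) (m r lp : ℕ) (hr : r ≤ lp) :
    G.sgale s (pre S (m + r)) ≤ G.sgale s (pre S m) * 2 ^ (s * lp) := by
  unfold FSG.sgale
  have hcard : (Fintype.card Bool : ℝ) = 2 := by simp
  rw [pre_length, pre_length, hcard]
  have h2 : (0:ℝ) < 2 := two_pos
  have hb := mart_block_bound G S m r
  have hm := FSG.mart_nonneg_s9 G (pre S m)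
  calc (2:ℝ) ^ ((s - 1) * ((m + r : ℕ):ℝ)) * G.mart (pre S (m + r))
      ≤ (2:ℝ) ^ ((s - 1) * ((m + r : ℕ):ℝ)) * (G.mart (pre S m) * 2 ^ r) := by
        apply mul_le_mul_of_nonneg_left hb (Real.rpow_nonneg h2.le _)
    _ = (2:ℝ) ^ ((s - 1) * (m:ℝ)) * G.mart (pre S m) * 2 ^ (s * (r:ℝ)) := by
        rw [← Real.rpow_natCast 2 r,
          show (s - 1) * ((m + r : ℕ):ℝ) = ((s - 1) * (m:ℝ)) + ((s - 1) * (r:ℝ)) by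
            push_cast; ring,
          Real.rpow_add h2,
          show s * (r:ℝ) = ((s - 1) * (r:ℝ)) + (r:ℝ) by ring,
          Real.rpow_add h2]
        ring
    _ ≤ (2:ℝ) ^ ((s - 1) * (m:ℝ)) * G.mart (pre S m) * 2 ^ (s * (lp:ℝ)) := by
        apply mul_le_mul_of_nonneg_left _ (by positivity)
        apply Real.rpow_le_rpow_of_exponent_le one_le_two
        apply mul_le_mul_of_nonneg_left _ hs
        exact_mod_cast hr

lemma gen_id (a b u v : ℝ) (ha : 0 < a) (hb : 0 < b) (k : ℕ) (h : a ^ u = b ^ v) :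
    a ^ ((u - 1) * (k:ℝ)) * (a / b) ^ k = b ^ ((v - 1) * (k:ℝ)) := by
  rw [← Real.rpow_natCast (a / b) k, Real.div_rpow ha.le hb.le, ← mul_div_assoc,
    ← Real.rpow_add ha]
  have e1 : (u - 1) * (k:ℝ) + (k:ℝ) = u * k := by ring
  rw [e1, Real.rpow_mul ha.le, h, ← Real.rpow_mul hb.le, ← Real.rpow_sub hb]
  congr 1
  ring

lemma dir2_success (hl : 0 < l) (hA : A.Nonempty) (hA2 : 1 < A.card)
    (hT : ∀ k : ℕ, (T k : Fin l → Bool) = fun i : Fin l => S (k * l + i))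
    (G : FSG Bool) (s : ℝ) (hs : 0 ≤ s) (hG : G.succeeds s S) :
    (GA l A hA G).succeeds (s * l / Real.logb 2 (A.card : ℝ)) T := by
  intro C
  obtain ⟨n, hn⟩ := hG (C * 2 ^ (s * (l:ℝ)))
  set k := n / l with hk
  have hrl : n % l ≤ l := (Nat.mod_lt n hl).le
  have hnkl : n = k * l + n % l := by
    rw [hk, Nat.mul_comm]
    exact (Nat.div_add_mod n l).symm
  have hbd := sgale_boundary G S s hs (k * l) (n % l) l hrl
  rw [← hnkl] at hbd
  have h2sl : (0:ℝ) < 2 ^ (s * (l:ℝ)) := Real.rpow_pos_of_pos two_pos _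
  have hCb : C < G.sgale s (pre S (k * l)) := by
    have h := lt_of_lt_of_le hn hbd
    exact (mul_lt_mul_iff_left₀ h2sl).mp h
  refine ⟨k, ?_⟩
  have ha1 : (1:ℝ) < (A.card : ℝ) := by exact_mod_cast hA2
  have ha0 : (0:ℝ) < (A.card : ℝ) := by linarith
  have hlogb : Real.logb 2 (A.card : ℝ) ≠ 0 :=
    ne_of_gt (Real.logb_pos one_lt_two ha1)
  set s' := s * l / Real.logb 2 (A.card : ℝ) with hs'
  have hid : (A.card : ℝ) ^ (s' : ℝ) = ((2:ℝ) ^ l) ^ (s : ℝ) := by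
    have h1 : (A.card : ℝ) = (2:ℝ) ^ Real.logb 2 (A.card : ℝ) :=
      (Real.rpow_logb two_pos (by norm_num) ha0).symm
    rw [← Real.rpow_natCast 2 l, ← Real.rpow_mul two_pos.le]
    nth_rewrite 1 [h1]
    rw [← Real.rpow_mul two_pos.le]
    congr 1
    rw [hs']
    field_simp
  have hgen := gen_id (A.card : ℝ) ((2:ℝ) ^ l) s' s ha0 (by positivity) k hid
  have hb2 : ((2:ℝ) ^ l) ^ ((s - 1) * (k:ℝ)) = (2:ℝ) ^ ((s - 1) * ((k * l : ℕ):ℝ)) := by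
    rw [← Real.rpow_natCast 2 l, ← Real.rpow_mul two_pos.le]
    congr 1
    push_cast
    ring
  show C < (GA l A hA G).sgale s' (pre T k)
  unfold FSG.sgale
  rw [pre_length, card_blk l A hA]
  have hmreq := GA_mart l A hA G hT k
  calc C < G.sgale s (pre S (k * l)) := hCb
    _ = (2:ℝ) ^ ((s - 1) * ((k * l : ℕ):ℝ)) * G.mart (pre S (k * l)) := by
        unfold FSG.sgale
        rw [pre_length]
        norm_num
    _ = ((A.card : ℝ) ^ ((s' - 1) * (k:ℝ)) * (((A.card : ℝ)) / 2 ^ l) ^ k)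
        * G.mart (pre S (k * l)) := by rw [hgen, hb2]
    _ = (A.card : ℝ) ^ ((s' - 1) * (k:ℝ))
        * (G.mart (pre S (k * l)) * (((A.card : ℝ)) / 2 ^ l) ^ k) := by ring
    _ ≤ (A.card : ℝ) ^ ((s' - 1) * (k:ℝ)) * (GA l A hA G).mart (pre T k) :=
        mul_le_mul_of_nonneg_left hmreq (Real.rpow_nonneg ha0.le _)

/-- pointwise prefix splitting -/
lemma prefix_split {u v : List Bool} (x : ℚ) (hu : u.length < v.length) :
    (if u <+: v then x else 0)
      = (if u ++ [false] <+: v then x else 0) + (if u ++ [true] <+: v then x else 0) := by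
  by_cases hp : u <+: v
  · have hu' : u = v.take u.length := List.prefix_iff_eq_take.mp hp
    set b0 := v[u.length]'hu with hb0
    have htake : v.take (u.length + 1) = u ++ [b0] := by
      rw [List.take_succ, List.getElem?_eq_getElem hu]
      rw [← hu']
      rfl
    have h1 : u ++ [b0] <+: v := htake ▸ List.take_prefix _ v
    have key : ∀ b : Bool, (u ++ [b] <+: v) ↔ b = b0 := by
      intro b
      constructor
      · intro hb
        have e1 : u ++ [b] = v.take (u.length + 1) := by
          have := List.prefix_iff_eq_take.mp hb
          simpa using this
        rw [htake] at e1
        have := List.append_inj_right e1 rfl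
        simpa using this
      · rintro rfl
        exact h1
    rw [if_pos hp]
    simp only [key]
    cases b0 <;> simp
  · have hnb : ∀ b : Bool, ¬(u ++ [b] <+: v) := fun b hb => hp ((u.prefix_append [b]).trans hb)
    simp [hp, hnb]

/-- Total bet weight on blocks extending `u`. -/
def Wq (G : FSG {v : Fin l → Bool // v ∈ A}) (q : G.Q) (u : List Bool) : ℚ :=
  ∑ a : {v : Fin l → Bool // v ∈ A},
    if u <+: List.ofFn ((a : Fin l → Bool)) then G.β q a else 0

lemma Wq_nonneg (G : FSG {v : Fin l → Bool // v ∈ A}) (q : G.Q) (u : List Bool) :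
    0 ≤ Wq l A G q u := by
  apply Finset.sum_nonneg
  intro a _
  by_cases h : u <+: List.ofFn ((a : Fin l → Bool)) <;> simp [h, G.β_nonneg]

lemma Wq_nil (G : FSG {v : Fin l → Bool // v ∈ A}) (q : G.Q) : Wq l A G q [] = 1 := by
  rw [Wq]
  rw [Finset.sum_congr rfl (fun a _ => if_pos List.nil_prefix)]
  exact G.β_sum q

lemma Wq_split (G : FSG {v : Fin l → Bool // v ∈ A}) (q : G.Q) (u : List Bool)
    (hu : u.length < l) :
    Wq l A G q u = Wq l A G q (u ++ [false]) + Wq l A G q (u ++ [true]) := by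
  rw [Wq, Wq, Wq, ← Finset.sum_add_distrib]
  apply Finset.sum_congr rfl
  intro a _
  exact prefix_split (G.β q a) (by simpa using hu)

lemma Wq_full (G : FSG {v : Fin l → Bool // v ∈ A}) (q : G.Q)
    (a : {v : Fin l → Bool // v ∈ A}) :
    Wq l A G q (List.ofFn ((a : Fin l → Bool))) = G.β q a := by
  rw [Wq]
  have key : ∀ a' : {v : Fin l → Bool // v ∈ A},
      (List.ofFn ((a : Fin l → Bool)) <+: List.ofFn ((a' : Fin l → Bool))) ↔ a' = a := by
    intro a'
    constructor
    · intro h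
      have he := h.eq_of_length (by simp)
      have := List.ofFn_injective he
      exact Subtype.ext this.symm
    · rintro rfl
      exact List.prefix_refl _
  rw [Finset.sum_congr rfl (fun a' _ => by rw [if_congr (key a') rfl rfl])]
  simp

lemma Wq_ext_zero (G : FSG {v : Fin l → Bool // v ∈ A}) (q : G.Q) (u : List Bool)
    (hu : u.length < l) (h : Wq l A G q u = 0) (b : Bool) : Wq l A G q (u ++ [b]) = 0 := by
  have hs := Wq_split l A G q u hu
  have h1 := Wq_nonneg l A G q (u ++ [false])
  have h2 := Wq_nonneg l A G q (u ++ [true])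
  cases b
  · linarith [hs ▸ h]
  · linarith [hs ▸ h]

/-- The binary gambler induced by a block gambler. -/
def Gbin (hl : 0 < l) (G : FSG {v : Fin l → Bool // v ∈ A}) : FSG Bool where
  Q := G.Q × {u : List Bool // u.length < l}
  fin := by
    have h1 := G.fin
    have h2 : Finite {u : List Bool // u.length < l} :=
      (List.finite_length_lt Bool l).to_subtype
    exact Finite.instProd
  q0 := (G.q0, ⟨[], hl⟩)
  δ := fun p b =>
    if h : (p.2.val ++ [b]).length = l then
      (if hb : (fun i : Fin l => (p.2.val ++ [b]).getD i false) ∈ A then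
        (G.δ p.1 ⟨_, hb⟩, ⟨[], hl⟩) else (p.1, ⟨[], hl⟩))
    else (p.1, ⟨p.2.val ++ [b], by
      have := p.2.2
      simp only [List.length_append, List.length_singleton] at h ⊢
      omega⟩)
  β := fun p b => if Wq l A G p.1 p.2.val = 0 then 1/2
      else Wq l A G p.1 (p.2.val ++ [b]) / Wq l A G p.1 p.2.val
  β_nonneg := by
    intro p b
    by_cases h : Wq l A G p.1 p.2.val = 0
    · rw [if_pos h]
      norm_num
    · rw [if_neg h]
      exact div_nonneg (Wq_nonneg l A G p.1 _) (Wq_nonneg l A G p.1 _)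
  β_sum := by
    intro p
    rw [Fintype.sum_bool]
    by_cases h : Wq l A G p.1 p.2.val = 0
    · rw [if_pos h, if_pos h]
      norm_num
    · rw [if_neg h, if_neg h, ← add_div]
      rw [show Wq l A G p.1 (p.2.val ++ [true]) + Wq l A G p.1 (p.2.val ++ [false])
          = Wq l A G p.1 p.2.val by rw [Wq_split l A G p.1 p.2.val p.2.2]; ring]
      exact div_self h

lemma Gbin_beta (hl : 0 < l) (G : FSG {v : Fin l → Bool // v ∈ A}) (q : G.Q)
    (u : List Bool) (hu : u.length < l) (b : Bool) :
    (Gbin l A hl G).β (q, ⟨u, hu⟩) b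
      = if Wq l A G q u = 0 then 1/2 else Wq l A G q (u ++ [b]) / Wq l A G q u := rfl

lemma Gbin_delta_mid (hl : 0 < l) (G : FSG {v : Fin l → Bool // v ∈ A}) (q : G.Q)
    (u : List Bool) (hu : u.length < l) (b : Bool) (h : (u ++ [b]).length ≠ l)
    (hlt : (u ++ [b]).length < l) :
    (Gbin l A hl G).δ (q, ⟨u, hu⟩) b = (q, ⟨u ++ [b], hlt⟩) := by
  show (if h' : (u ++ [b]).length = l then _ else _) = _
  exact dif_neg h

lemma Gbin_delta_full (hl : 0 < l) (G : FSG {v : Fin l → Bool // v ∈ A}) (q : G.Q)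
    (u : List Bool) (hu : u.length < l) (b : Bool) (h : (u ++ [b]).length = l)
    (hmem : (fun i : Fin l => (u ++ [b]).getD i false) ∈ A) :
    (Gbin l A hl G).δ (q, ⟨u, hu⟩) b
      = (G.δ q ⟨fun i : Fin l => (u ++ [b]).getD i false, hmem⟩, ⟨[], hl⟩) := by
  show (if h' : (u ++ [b]).length = l then _ else _) = _
  exact (dif_pos h).trans (dif_pos hmem)

variable {S : ℕ → Bool} {T : ℕ → {v : Fin l → Bool // v ∈ A}} in
lemma Gbin_run_partial (hl : 0 < l) (G : FSG {v : Fin l → Bool // v ∈ A}) (k : ℕ) (q : G.Q)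
    (hrun : (Gbin l A hl G).run (pre S (k * l)) = (q, ⟨[], hl⟩)) :
    ∀ j, ∀ hj : j < l, (Gbin l A hl G).run (pre S (k * l + j))
      = (q, ⟨pre (fun i => S (k * l + i)) j, by rw [pre_length]; exact hj⟩) := by
  intro j
  induction j with
  | zero =>
    intro _
    rw [Nat.add_zero, hrun]
    simp [Prod.ext_iff, Subtype.ext_iff, pre_zero]
    rfl
  | succ j ih =>
    intro hj1
    have hj : j < l := Nat.lt_of_succ_lt hj1
    have hprev := ih hj
    rw [show k * l + (j+1) = (k * l + j) + 1 by ring, pre_succ, FSG.run_concat, hprev]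
    rw [Gbin_delta_mid l A hl G q _ _ (S (k * l + j))
      (by rw [List.length_append, pre_length]; simpa using hj1.ne)
      (by rw [List.length_append, pre_length]; simpa using hj1)]
    simp [Prod.ext_iff, Subtype.ext_iff, pre_succ]
    rfl

variable {S : ℕ → Bool} {T : ℕ → {v : Fin l → Bool // v ∈ A}} in
lemma Gbin_mart_partial (hl : 0 < l) (G : FSG {v : Fin l → Bool // v ∈ A}) (k : ℕ) (q : G.Q)
    (hrun : (Gbin l A hl G).run (pre S (k * l)) = (q, ⟨[], hl⟩)) :
    ∀ j, j ≤ l →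
      (Gbin l A hl G).mart (pre S (k * l)) * 2 ^ j
          * ((Wq l A G q (pre (fun i => S (k * l + i)) j) : ℚ) : ℝ)
        ≤ (Gbin l A hl G).mart (pre S (k * l + j)) := by
  intro j
  induction j with
  | zero =>
    intro _
    rw [Nat.add_zero, pre_zero, Wq_nil]
    norm_num
  | succ j ih =>
    intro hj1
    have hj : j < l := Nat.lt_of_succ_le hj1
    have hrj := Gbin_run_partial l A hl G k q hrun j hj
    set u := pre (fun i : ℕ => S (k * l + i)) j with hu
    set b := S (k * l + j) with hb
    have hulen : u.length < l := by rw [hu, pre_length]; exact hj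
    have hunext : pre (fun i : ℕ => S (k * l + i)) (j+1) = u ++ [b] := pre_succ _ j
    rw [show k * l + (j+1) = (k * l + j) + 1 by ring, pre_succ S (k * l + j), FSG.mart_concat,
      hrj, Gbin_beta l A hl G q u _ b, hunext]
    have hcard : ((Fintype.card Bool : ℕ) : ℝ) = 2 := by simp
    rw [hcard]
    have hmS := FSG.mart_nonneg_s9 (Gbin l A hl G) (pre S (k * l + j))
    by_cases hW : Wq l A G q u = 0
    · rw [if_pos hW]
      have hz : Wq l A G q (u ++ [b]) = 0 := Wq_ext_zero l A G q u hulen hW b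
      rw [hz]
      push_cast
      rw [mul_zero]
      nlinarith
    · rw [if_neg hW]
      have hWnn := Wq_nonneg l A G q u
      have hWpos : (0:ℚ) < Wq l A G q u := lt_of_le_of_ne hWnn (Ne.symm hW)
      have hWbnn := Wq_nonneg l A G q (u ++ [b])
      have ihj := ih hj.le
      have hfac : (0:ℝ) ≤ ((Wq l A G q (u ++ [b]) / Wq l A G q u : ℚ) : ℝ) * 2 := by
        have : (0:ℚ) ≤ Wq l A G q (u ++ [b]) / Wq l A G q u := div_nonneg hWbnn hWnn
        have : (0:ℝ) ≤ ((Wq l A G q (u ++ [b]) / Wq l A G q u : ℚ) : ℝ) := by exact_mod_cast this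
        linarith
      calc (Gbin l A hl G).mart (pre S (k * l)) * 2 ^ (j+1)
            * ((Wq l A G q (u ++ [b]) : ℚ) : ℝ)
          = ((Gbin l A hl G).mart (pre S (k * l)) * 2 ^ j * ((Wq l A G q u : ℚ) : ℝ))
            * (((Wq l A G q (u ++ [b]) / Wq l A G q u : ℚ) : ℝ) * 2) := by
            have hWne : ((Wq l A G q u : ℚ) : ℝ) ≠ 0 := by exact_mod_cast hW
            push_cast
            field_simp
            ring
        _ ≤ (Gbin l A hl G).mart (pre S (k * l + j))
            * (((Wq l A G q (u ++ [b]) / Wq l A G q u : ℚ) : ℝ) * 2) :=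
            mul_le_mul_of_nonneg_right ihj hfac

variable {S : ℕ → Bool} {T : ℕ → {v : Fin l → Bool // v ∈ A}} in
lemma Gbin_inv (hl : 0 < l) (hA : A.Nonempty) (G : FSG {v : Fin l → Bool // v ∈ A})
    (hT : ∀ k : ℕ, (T k : Fin l → Bool) = fun i : Fin l => S (k * l + i)) (k : ℕ) :
    (Gbin l A hl G).run (pre S (k * l)) = (G.run (pre T k), ⟨[], hl⟩) ∧
      G.mart (pre T k) * ((2:ℝ) ^ l / (A.card : ℝ)) ^ k
        ≤ (Gbin l A hl G).mart (pre S (k * l)) := by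
  have ha0 : (0:ℝ) < (A.card : ℝ) := by exact_mod_cast hA.card_pos
  induction k with
  | zero =>
    constructor
    · rw [Nat.zero_mul, pre_zero, pre_zero]
      rfl
    · rw [Nat.zero_mul, pre_zero, pre_zero, FSG.mart_nil_s9, FSG.mart_nil_s9]
      norm_num
  | succ k ih =>
    obtain ⟨hrun, hmart⟩ := ih
    set q := G.run (pre T k) with hq
    have hl1 : l - 1 < l := Nat.sub_lt hl one_pos
    have hrl := Gbin_run_partial l A hl G k q hrun (l-1) hl1
    have hll : k * l + l = (k * l + (l-1)) + 1 := by omega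
    have hlist : pre (fun i : ℕ => S (k * l + i)) (l-1) ++ [S (k * l + (l-1))]
        = List.ofFn (fun i : Fin l => S (k * l + i)) := by
      have h1 := (pre_succ (fun i : ℕ => S (k * l + i)) (l-1)).symm
      rw [show l - 1 + 1 = l by omega] at h1
      exact h1
    have hlen2 : (pre (fun i : ℕ => S (k * l + i)) (l-1) ++ [S (k * l + (l-1))]).length = l := by
      rw [hlist, List.length_ofFn]
    have hblkfun : (fun i : Fin l =>
        (pre (fun i : ℕ => S (k * l + i)) (l-1) ++ [S (k * l + (l-1))]).getD i false)
        = ((T k : Fin l → Bool)) := by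
      funext i
      rw [hT k, hlist, List.getD_eq_getElem _ _ (by rw [List.length_ofFn]; exact i.isLt)]
      simp
    have hmem : (fun i : Fin l =>
        (pre (fun i : ℕ => S (k * l + i)) (l-1) ++ [S (k * l + (l-1))]).getD i false) ∈ A := by
      rw [hblkfun]
      exact (T k).2
    constructor
    · rw [show (k+1) * l = k * l + l by ring, hll, pre_succ, FSG.run_concat, hrl,
        Gbin_delta_full l A hl G q _ _ _ hlen2 hmem]
      rw [pre_succ, FSG.run_concat, ← hq]
      have : (⟨fun i : Fin l =>
          (pre (fun i : ℕ => S (k * l + i)) (l-1) ++ [S (k * l + (l-1))]).getD i false, hmem⟩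
          : {v : Fin l → Bool // v ∈ A}) = T k := Subtype.ext hblkfun
      rw [this]
    · have hfull := Gbin_mart_partial l A hl G k q hrun l (le_refl l)
      have hWfull : Wq l A G q (pre (fun i : ℕ => S (k * l + i)) l) = G.β q (T k) := by
        have h2 : pre (fun i : ℕ => S (k * l + i)) l = List.ofFn ((T k : Fin l → Bool)) := by
          rw [hT k]
          rfl
        rw [h2, Wq_full]
      rw [hWfull] at hfull
      have hmT : G.mart (pre T (k+1))
          = G.mart (pre T k) * ((G.β q (T k) : ℝ) * (A.card : ℝ)) := by
        rw [pre_succ, FSG.mart_concat, card_blk l A hA, ← hq]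
      rw [show (k+1) * l = k * l + l by ring, hmT]
      have hbnn : (0:ℝ) ≤ (G.β q (T k) : ℝ) := by exact_mod_cast G.β_nonneg q (T k)
      calc G.mart (pre T k) * ((G.β q (T k) : ℝ) * (A.card : ℝ))
            * ((2:ℝ) ^ l / (A.card : ℝ)) ^ (k+1)
          = (G.mart (pre T k) * ((2:ℝ) ^ l / (A.card : ℝ)) ^ k)
            * (2 ^ l * (G.β q (T k) : ℝ)) := by
            have hne : (A.card : ℝ) ≠ 0 := ha0.ne'
            have e : (A.card : ℝ) * ((2:ℝ) ^ l / (A.card : ℝ)) = 2 ^ l := by field_simp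
            rw [pow_succ]
            linear_combination (G.mart (pre T k) * (G.β q (T k) : ℝ)
              * ((2:ℝ) ^ l / (A.card : ℝ)) ^ k) * e
        _ ≤ (Gbin l A hl G).mart (pre S (k * l)) * (2 ^ l * (G.β q (T k) : ℝ)) := by
            apply mul_le_mul_of_nonneg_right hmart (by positivity)
        _ = (Gbin l A hl G).mart (pre S (k * l)) * 2 ^ l * (G.β q (T k) : ℝ) := by ring
        _ ≤ (Gbin l A hl G).mart (pre S (k * l + l)) := hfull

variable {S : ℕ → Bool} {T : ℕ → {v : Fin l → Bool // v ∈ A}} in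
lemma dir1_success (hl : 0 < l) (hA : A.Nonempty)
    (hT : ∀ k : ℕ, (T k : Fin l → Bool) = fun i : Fin l => S (k * l + i))
    (G : FSG {v : Fin l → Bool // v ∈ A}) (s : ℝ) (hG : G.succeeds s T) :
    (Gbin l A hl G).succeeds (Real.logb 2 (A.card : ℝ) / l * s) S := by
  intro C
  obtain ⟨k, hk⟩ := hG C
  refine ⟨k * l, ?_⟩
  have ha0 : (0:ℝ) < (A.card : ℝ) := by exact_mod_cast hA.card_pos
  set c := Real.logb 2 (A.card : ℝ) / l with hc
  have hid : ((2:ℝ) ^ l) ^ (c * s) = (A.card : ℝ) ^ (s:ℝ) := by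
    have h1 : (A.card : ℝ) = (2:ℝ) ^ Real.logb 2 (A.card : ℝ) :=
      (Real.rpow_logb two_pos (by norm_num) ha0).symm
    rw [← Real.rpow_natCast 2 l, ← Real.rpow_mul two_pos.le]
    conv_rhs => rw [h1, ← Real.rpow_mul two_pos.le]
    congr 1
    rw [hc]
    have hlne : (l:ℝ) ≠ 0 := by exact_mod_cast hl.ne'
    field_simp
  have hgen := gen_id ((2:ℝ) ^ l) (A.card : ℝ) (c * s) s (by positivity) ha0 k hid
  have hb2 : ((2:ℝ) ^ l) ^ ((c * s - 1) * (k:ℝ)) = (2:ℝ) ^ ((c * s - 1) * ((k * l : ℕ):ℝ)) := by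
    rw [← Real.rpow_natCast 2 l, ← Real.rpow_mul two_pos.le]
    congr 1
    push_cast
    ring
  obtain ⟨-, hmart⟩ := Gbin_inv l A hl hA G hT k
  unfold FSG.sgale at hk ⊢
  rw [pre_length] at hk ⊢
  rw [card_blk l A hA] at hk
  have hcard : ((Fintype.card Bool : ℕ) : ℝ) = 2 := by simp
  rw [hcard]
  calc C < (A.card : ℝ) ^ ((s - 1) * (k:ℝ)) * G.mart (pre T k) := hk
    _ = (2:ℝ) ^ ((c * s - 1) * ((k * l : ℕ):ℝ))
        * (G.mart (pre T k) * ((2:ℝ) ^ l / (A.card : ℝ)) ^ k) := by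
        rw [← hgen, hb2]
        ring
    _ ≤ (2:ℝ) ^ ((c * s - 1) * ((k * l : ℕ):ℝ)) * (Gbin l A hl G).mart (pre S (k * l)) :=
        mul_le_mul_of_nonneg_left hmart (Real.rpow_nonneg two_pos.le _)

variable {S : ℕ → Bool} {T : ℕ → {v : Fin l → Bool // v ∈ A}} in
lemma card_one_eps (hl : 0 < l) (hA : A.Nonempty) (hc1 : A.card = 1)
    (hT : ∀ k : ℕ, (T k : Fin l → Bool) = fun i : Fin l => S (k * l + i))
    (ε : ℝ) (hε : 0 < ε) : ∃ G : FSG Bool, G.succeeds ε S := by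
  have hcB : (Fintype.card {v : Fin l → Bool // v ∈ A}) = 1 := by rw [card_blk l A hA, hc1]
  let G0 : FSG {v : Fin l → Bool // v ∈ A} :=
    { Q := Unit, fin := inferInstance, q0 := (), δ := fun _ _ => (), β := fun _ _ => 1,
      β_nonneg := fun _ _ => zero_le_one,
      β_sum := fun q => by rw [Finset.sum_const, Finset.card_univ, hcB, one_smul] }
  refine ⟨Gbin l A hl G0, ?_⟩
  intro C
  have hm0 : ∀ k, G0.mart (pre T k) = 1 := by
    intro k
    induction k with
    | zero => rw [pre_zero, FSG.mart_nil_s9]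
    | succ k ih =>
      rw [pre_succ, FSG.mart_concat, ih, hcB]
      norm_num
  have h1lt : (1:ℝ) < 2 ^ (ε * (l:ℝ)) := by
    rw [show (1:ℝ) = 2 ^ (0:ℝ) by rw [Real.rpow_zero]]
    apply Real.rpow_lt_rpow_of_exponent_lt one_lt_two
    have : (0:ℝ) < (l:ℝ) := by exact_mod_cast hl
    positivity
  obtain ⟨k, hk⟩ := pow_unbounded_of_one_lt C h1lt
  refine ⟨k * l, ?_⟩
  have hmart := (Gbin_inv l A hl hA G0 hT k).2
  rw [hm0 k, one_mul, hc1] at hmart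
  have hsimp : ((2:ℝ) ^ l / ((1:ℕ) : ℝ)) ^ k = ((2:ℝ) ^ l) ^ k := by norm_num
  rw [hsimp] at hmart
  unfold FSG.sgale
  rw [pre_length]
  have hcard : ((Fintype.card Bool : ℕ) : ℝ) = 2 := by simp
  rw [hcard]
  have hpowid : ((2:ℝ) ^ (ε * (l:ℝ))) ^ k = (2:ℝ) ^ (ε * ((k * l : ℕ):ℝ)) := by
    rw [← Real.rpow_natCast ((2:ℝ) ^ (ε * (l:ℝ))) k, ← Real.rpow_mul two_pos.le]
    congr 1
    push_cast
    ring
  have hpowid2 : (2:ℝ) ^ ((ε - 1) * ((k * l : ℕ):ℝ)) * ((2:ℝ) ^ l) ^ k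
      = (2:ℝ) ^ (ε * ((k * l : ℕ):ℝ)) := by
    rw [← Real.rpow_natCast ((2:ℝ) ^ l) k, ← Real.rpow_natCast 2 l,
      ← Real.rpow_mul two_pos.le, ← Real.rpow_add two_pos]
    congr 1
    push_cast
    ring
  calc C < ((2:ℝ) ^ (ε * (l:ℝ))) ^ k := hk
    _ = (2:ℝ) ^ (ε * ((k * l : ℕ):ℝ)) := hpowid
    _ = (2:ℝ) ^ ((ε - 1) * ((k * l : ℕ):ℝ)) * ((2:ℝ) ^ l) ^ k := hpowid2.symm
    _ ≤ (2:ℝ) ^ ((ε - 1) * ((k * l : ℕ):ℝ)) * (Gbin l A hl G0).mart (pre S (k * l)) :=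
        mul_le_mul_of_nonneg_left hmart (Real.rpow_nonneg two_pos.le _)

end Main

open Pointwise in
theorem dimFS_block_alphabet (l : ℕ) (hl : 0 < l)
    (A : Finset (Fin l → Bool)) (hA : A.Nonempty)
    (S : ℕ → Bool)
    (hblocks : ∀ k : ℕ, (fun i : Fin l => S (k * l + i)) ∈ A)
    (T : ℕ → {v : Fin l → Bool // v ∈ A})
    (hT : ∀ k : ℕ, (T k : Fin l → Bool) = fun i : Fin l => S (k * l + i)) :
    dimFS S = Real.logb 2 (A.card : ℝ) / (l : ℝ) * dimFS T := by
  classical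
  rcases Nat.lt_or_ge A.card 2 with hc1 | hc2
  · -- degenerate case |A| = 1
    have hc1' : A.card = 1 := by have := hA.card_pos; omega
    have hlogb : Real.logb 2 ((A.card : ℕ) : ℝ) = 0 := by
      rw [hc1']
      simp
    rw [hlogb, zero_div, zero_mul]
    unfold dimFS
    set D := {s : ℝ | 0 ≤ s ∧ ∃ G : FSG Bool, G.succeeds s S} with hD
    have hbdd : BddBelow D := ⟨0, fun x hx => hx.1⟩
    have hmem : ∀ ε : ℝ, 0 < ε → ε ∈ D := by
      intro ε hε
      exact ⟨hε.le, card_one_eps l A hl hA hc1' hT ε hε⟩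
    apply le_antisymm
    · by_contra h
      push_neg at h
      have h2 := csInf_le hbdd (hmem (sInf D / 2) (by linarith))
      linarith
    · exact le_csInf ⟨1, hmem 1 one_pos⟩ (fun x hx => hx.1)
  · have ha1 : (1:ℝ) < (A.card : ℝ) := by exact_mod_cast hc2
    have hlogbpos : 0 < Real.logb 2 (A.card : ℝ) := Real.logb_pos one_lt_two ha1
    have hlpos : (0:ℝ) < (l:ℝ) := by exact_mod_cast hl
    have hc2' : 1 < A.card := hc2
    set c := Real.logb 2 (A.card : ℝ) / (l:ℝ) with hc
    have hcpos : 0 < c := div_pos hlogbpos hlpos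
    have hset : {s : ℝ | 0 ≤ s ∧ ∃ G : FSG Bool, G.succeeds s S}
        = c • {s : ℝ | 0 ≤ s ∧ ∃ G : FSG {v : Fin l → Bool // v ∈ A}, G.succeeds s T} := by
      ext s
      rw [Set.mem_smul_set]
      constructor
      · rintro ⟨hs0, G, hG⟩
        refine ⟨s * l / Real.logb 2 (A.card : ℝ),
          ⟨div_nonneg (mul_nonneg hs0 hlpos.le) hlogbpos.le,
            GA l A hA G, dir2_success l A hl hA hc2' hT G s hs0 hG⟩, ?_⟩
        rw [smul_eq_mul, hc]
        field_simp
      · rintro ⟨t, ⟨ht0, G, hG⟩, rfl⟩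
        rw [smul_eq_mul]
        refine ⟨mul_nonneg hcpos.le ht0, Gbin l A hl G, ?_⟩
        exact dir1_success l A hl hA hT G t hG
    show sInf _ = c * sInf _
    rw [hset, Real.sInf_smul_of_nonneg hcpos.le, smul_eq_mul]
end
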